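/- Let X, Y be Banach spaces, Ω ⊆ X an open set, and f : Ω → Y twice continuously differentiable. Let x₀ ∈ Ω, R > 0 and κ := sup{t ∈ [0, R) : B(x₀, t) ⊆ Ω}. Let λ > 0 and ψ : [0, R) → ℝ be twice continuously differentiable with ψ″ nondecreasing on [0, R), and suppose λ‖f″(x)‖ ≤ ψ″(‖x − x₀‖) for all x ∈ B(x₀, κ). Then λ‖f′(y) − f′(x)‖ ≤ ψ′(‖y − x‖ + ‖x − x₀‖) − ψ′(‖x − x₀‖) for all x, y ∈ B(x₀, κ) with ‖y − x‖ + ‖x − x₀‖ < R. -/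

import Mathlib

open Metric Set Filter

/-- Lemma `lc`: if `λ‖f″(x)‖ ≤ ψ″(‖x − x₀‖)` on `B(x₀, κ)` (with `ψ″` nondecreasing),
then `f` and `ψ` satisfy the majorant condition
`λ‖f′(y) − f′(x)‖ ≤ ψ′(‖y − x‖ + ‖x − x₀‖) − ψ′(‖x − x₀‖)`. -/
theorem stmt19
    {X Y : Type*} [NormedAddCommGroup X] [NormedSpace ℝ X] [CompleteSpace X]
    [NormedAddCommGroup Y] [NormedSpace ℝ Y] [CompleteSpace Y]
    (Ω : Set X) (hΩ : IsOpen Ω)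
    (f : X → Y) (f' : X → X →L[ℝ] Y) (f'' : X → X →L[ℝ] X →L[ℝ] Y)
    (hf1 : ∀ x ∈ Ω, HasFDerivAt f (f' x) x)
    (hf2 : ∀ x ∈ Ω, HasFDerivAt f' (f'' x) x)
    (hf2c : ContinuousOn f'' Ω)
    (x₀ : X) (hx₀ : x₀ ∈ Ω) (R : ℝ) (hR : 0 < R)
    (κ : ℝ) (hκ : κ = sSup {t : ℝ | t ∈ Ico (0:ℝ) R ∧ ball x₀ t ⊆ Ω})
    (lam : ℝ) (hlam : 0 < lam)
    (ψ ψ' ψ'' : ℝ → ℝ)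
    (hψ1 : ∀ t ∈ Ico (0:ℝ) R, HasDerivAt ψ (ψ' t) t)
    (hψ2 : ∀ t ∈ Ico (0:ℝ) R, HasDerivAt ψ' (ψ'' t) t)
    (hψ2c : ContinuousOn ψ'' (Ico (0:ℝ) R))
    (hψ2mono : MonotoneOn ψ'' (Ico (0:ℝ) R))
    (hbound : ∀ x ∈ ball x₀ κ, lam * ‖f'' x‖ ≤ ψ'' ‖x - x₀‖) :
    ∀ x ∈ ball x₀ κ, ∀ y ∈ ball x₀ κ, ‖y - x‖ + ‖x - x₀‖ < R →
      lam * ‖f' y - f' x‖ ≤ ψ' (‖y - x‖ + ‖x - x₀‖) - ψ' ‖x - x₀‖ := by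
  -- ball x₀ κ ⊆ Ω
  have hSne : ({t : ℝ | t ∈ Ico (0:ℝ) R ∧ ball x₀ t ⊆ Ω}).Nonempty := by
    refine ⟨0, ⟨⟨le_refl 0, hR⟩, ?_⟩⟩
    simp
  have hball : ball x₀ κ ⊆ Ω := by
    intro z hz
    rw [mem_ball, dist_eq_norm] at hz
    rw [hκ] at hz
    obtain ⟨t, ⟨⟨ht0, htR⟩, htΩ⟩, hlt⟩ := exists_lt_of_lt_csSup hSne hz
    exact htΩ (by rwa [mem_ball, dist_eq_norm])
  intro x hx y hy hlt
  set c := ‖y - x‖ with hc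
  set d := ‖x - x₀‖ with hd
  have hc0 : (0:ℝ) ≤ c := norm_nonneg _
  have hd0 : (0:ℝ) ≤ d := norm_nonneg _
  -- the segment map
  set h : ℝ → X := fun t => x + t • (y - x) with hhdef
  have hseg : ∀ t ∈ Icc (0:ℝ) 1, h t ∈ ball x₀ κ := by
    intro t ⟨ht0, ht1⟩
    have : h t = (1 - t) • x + t • y := by
      simp only [hhdef, smul_sub, sub_smul, one_smul]
      abel
    rw [this]
    exact (convex_ball x₀ κ) hx hy (by linarith) ht0 (by ring)
  have hnorm : ∀ t ∈ Icc (0:ℝ) 1, ‖h t - x₀‖ ≤ c * t + d := by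
    intro t ⟨ht0, ht1⟩
    have : h t - x₀ = (x - x₀) + t • (y - x) := by simp only [hhdef]; abel
    rw [this]
    calc ‖(x - x₀) + t • (y - x)‖ ≤ ‖x - x₀‖ + ‖t • (y - x)‖ := norm_add_le _ _
      _ = d + |t| * c := by rw [norm_smul]; rfl
      _ = d + t * c := by rw [abs_of_nonneg ht0]
      _ = c * t + d := by ring
  have hdomR : ∀ t ∈ Icc (0:ℝ) 1, c * t + d ∈ Ico (0:ℝ) R := by
    intro t ⟨ht0, ht1⟩
    constructor
    · positivity
    · nlinarith
  -- G and B
  set G : ℝ → (X →L[ℝ] Y) := fun t => lam • (f' (h t) - f' x) with hGdef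
  set G' : ℝ → (X →L[ℝ] Y) := fun t => lam • ((f'' (h t)) (y - x)) with hG'def
  set B : ℝ → ℝ := fun t => ψ' (c * t + d) - ψ' d with hBdef
  set B' : ℝ → ℝ := fun t => ψ'' (c * t + d) * c with hB'def
  have hhderiv : ∀ t : ℝ, HasDerivAt h (y - x) t := by
    intro t
    simpa [hhdef] using ((hasDerivAt_id t).smul_const (y - x)).const_add x
  have hGderiv : ∀ t ∈ Icc (0:ℝ) 1, HasDerivAt G (G' t) t := by
    intro t ht
    have hmem : h t ∈ Ω := hball (hseg t ht)
    have := ((hf2 (h t) hmem).comp_hasDerivAt t (hhderiv t))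
    exact ((this.sub_const (f' x)).const_smul lam)
  have hBderiv : ∀ t ∈ Icc (0:ℝ) 1, HasDerivAt B (B' t) t := by
    intro t ht
    have hdt : c * t + d ∈ Ico (0:ℝ) R := hdomR t ht
    have hlin : HasDerivAt (fun s : ℝ => c * s + d) c t := by
      simpa using ((hasDerivAt_id t).const_mul c).add_const d
    have := (hψ2 _ hdt).comp t hlin
    simpa [hBdef, hB'def, mul_comm] using this.sub_const (ψ' d)
  have key : ∀ u ∈ Icc (0:ℝ) 1, ‖G u‖ ≤ B u := by
    apply image_norm_le_of_norm_deriv_right_le_deriv_boundary'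
      (fun t ht => (hGderiv t ht).continuousAt.continuousWithinAt)
      (fun t ht => (hGderiv t (Ico_subset_Icc_self ht)).hasDerivWithinAt)
      ?_ (fun t ht => (hBderiv t ht).continuousAt.continuousWithinAt)
      (fun t ht => (hBderiv t (Ico_subset_Icc_self ht)).hasDerivWithinAt)
    · -- bound on derivative
      intro t ht
      have ht' := Ico_subset_Icc_self ht
      have hmem : h t ∈ ball x₀ κ := hseg t ht'
      have hnt : ‖h t - x₀‖ ≤ c * t + d := hnorm t ht'
      have hdo : c * t + d ∈ Ico (0:ℝ) R := hdomR t ht'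
      have hno : ‖h t - x₀‖ ∈ Ico (0:ℝ) R :=
        ⟨norm_nonneg _, lt_of_le_of_lt hnt hdo.2⟩
      have h1 : lam * ‖f'' (h t)‖ ≤ ψ'' ‖h t - x₀‖ := hbound _ hmem
      have h2 : ψ'' ‖h t - x₀‖ ≤ ψ'' (c * t + d) := hψ2mono hno hdo hnt
      calc ‖G' t‖ = lam * ‖(f'' (h t)) (y - x)‖ := by
            have hns := norm_smul lam ((f'' (h t)) (y - x))
            rw [Real.norm_eq_abs, abs_of_pos hlam] at hns
            exact hns
        _ ≤ lam * (‖f'' (h t)‖ * c) := by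
            have := (f'' (h t)).le_opNorm (y - x)
            exact mul_le_mul_of_nonneg_left this hlam.le
        _ = (lam * ‖f'' (h t)‖) * c := by ring
        _ ≤ ψ'' (c * t + d) * c := by
            apply mul_le_mul_of_nonneg_right (h1.trans h2) hc0
        _ = B' t := rfl
    · -- initial condition
      simp [hGdef, hBdef, hhdef]
  have := key 1 ⟨zero_le_one, le_refl 1⟩
  have hG1 : G 1 = lam • (f' y - f' x) := by simp [hGdef, hhdef]
  rw [hG1] at this
  have hns := norm_smul lam (f' y - f' x)
  rw [Real.norm_eq_abs, abs_of_pos hlam] at hns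
  rw [hns] at this
  have hB1 : B 1 = ψ' (c + d) - ψ' d := by simp [hBdef]
  rw [hB1] at this
  simpa using this
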